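/- arXiv:1406.3773 — 2 statements merged into one kernel-verified Lean document; each statement's English description precedes it below -/
import Mathlib

section
/- Let K be a field of characteristic 0 and P(x) ∈ K[x] a monic palindromic polynomial of degree 2n with palindromic reduction Q(y) (the monic degree-n polynomial with P(x) = x^n Q(x + 1/x)). Then P is separable if and only if the discriminant Δ of Q is nonzero and Δ' := Q(2)·Q(−2) is nonzero. -/
open Polynomial

/-- A monic palindromic polynomial `P` of degree `2n`, with palindromic reduction `Q`,
is separable iff the discriminant `Δ = ∏_{i<j} (y_i - y_j)²` of `Q` is nonzero and
`Δ' = Q(2)·Q(-2)` is nonzero. -/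
theorem palindromic_separable_iff
    (K : Type*) [Field K] [CharZero K] (n : ℕ)
    (P Q : Polynomial K) (hPmonic : P.Monic) (hPdeg : P.natDegree = 2 * n)
    (hconst : P.coeff 0 ≠ 0) (hpal : P.reverse = P)
    (hQmonic : Q.Monic) (hQdeg : Q.natDegree = n)
    (x : Fin n → AlgebraicClosure K) (hx : ∀ i, x i ≠ 0)
    (hProots : P.map (algebraMap K (AlgebraicClosure K)) =
      ∏ i, ((X - C (x i)) * (X - C (x i)⁻¹)))
    (hQroots : Q.map (algebraMap K (AlgebraicClosure K)) =
      ∏ i, (X - C (x i + (x i)⁻¹))) :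
    P.Separable ↔
      ((∏ i, ∏ j ∈ Finset.Ioi i, ((x i + (x i)⁻¹) - (x j + (x j)⁻¹)) ^ 2) ≠ 0 ∧
        Q.eval 2 * Q.eval (-2) ≠ 0) := by
  set f : K →+* AlgebraicClosure K := algebraMap K (AlgebraicClosure K) with hf
  -- key pointwise lemma
  have key : ∀ i j : Fin n, x i + (x i)⁻¹ = x j + (x j)⁻¹ ↔ (x i = x j ∨ x i = (x j)⁻¹) := by
    intro i j
    constructor
    · intro h
      have h2 : (x i - x j) * (x i * x j - 1) = 0 := by
        have e : (x i - x j) * (x i * x j - 1)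
            = (x i * x j) * ((x i + (x i)⁻¹) - (x j + (x j)⁻¹)) := by
          field_simp [hx i, hx j]
          ring
        rw [e, h, sub_self, mul_zero]
      rcases mul_eq_zero.1 h2 with h3 | h3
      · exact Or.inl (sub_eq_zero.1 h3)
      · have h4 : x i * x j = 1 := sub_eq_zero.1 h3
        exact Or.inr (eq_inv_of_mul_eq_one_left (by linear_combination h4))
    · rintro (h | h)
      · rw [h]
      · rw [h, inv_inv, add_comm]
  have key2 : ∀ i : Fin n, x i + (x i)⁻¹ = 2 ↔ x i = 1 := by
    intro i
    constructor
    · intro h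
      have h2 : (x i - 1) ^ 2 = 0 := by
        have e : (x i - 1) ^ 2 = x i * ((x i + (x i)⁻¹) - 2) := by
          field_simp [hx i]
          ring
        rw [e, h, sub_self, mul_zero]
      have := (pow_eq_zero_iff two_ne_zero).1 h2
      exact sub_eq_zero.1 this
    · intro h; rw [h]; norm_num
  have key3 : ∀ i : Fin n, x i + (x i)⁻¹ = -2 ↔ x i = -1 := by
    intro i
    constructor
    · intro h
      have h2 : (x i + 1) ^ 2 = 0 := by
        have e : (x i + 1) ^ 2 = x i * ((x i + (x i)⁻¹) + 2) := by
          field_simp [hx i]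
          ring
        rw [e, h, neg_add_cancel, mul_zero]
      have := (pow_eq_zero_iff two_ne_zero).1 h2
      exact eq_neg_of_add_eq_zero_left this
    · intro h; rw [h]; norm_num
  -- inv not fixed
  have keyinv : ∀ i : Fin n, x i = (x i)⁻¹ → (x i = 1 ∨ x i = -1) := by
    intro i h
    have hsq : x i * x i = 1 := by
      nth_rewrite 1 [h]
      exact inv_mul_cancel₀ (hx i)
    have h2 : (x i - 1) * (x i + 1) = 0 := by linear_combination hsq
    rcases mul_eq_zero.1 h2 with h3 | h3
    · exact Or.inl (sub_eq_zero.1 h3)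
    · exact Or.inr (eq_neg_of_add_eq_zero_left h3)
  -- separability as injectivity
  set g : Fin n × Bool → AlgebraicClosure K := fun p => if p.2 then x p.1 else (x p.1)⁻¹ with hg
  have hsep : P.Separable ↔ Function.Injective g := by
    rw [← Polynomial.separable_map f, hProots]
    have e : ∏ i, ((X - C (x i)) * (X - C (x i)⁻¹))
        = ∏ p : Fin n × Bool, (X - C (g p)) := by
      rw [Fintype.prod_prod_type]
      refine Finset.prod_congr rfl fun i _ => ?_
      simp [hg, Fintype.prod_bool]
    rw [e, Polynomial.separable_prod_X_sub_C_iff]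
  -- middle condition
  have hmid : Function.Injective g ↔
      ((∀ i j : Fin n, x i + (x i)⁻¹ = x j + (x j)⁻¹ → i = j) ∧
        ∀ i : Fin n, x i ≠ 1 ∧ x i ≠ -1) := by
    constructor
    · intro hinj
      constructor
      · intro i j h
        rcases (key i j).1 h with h2 | h2
        · have : g (i, true) = g (j, true) := by simp [hg, h2]
          simpa using (hinj this)
        · have : g (i, true) = g (j, false) := by simp [hg, h2]
          have := hinj this
          simp at this
      · intro i
        constructor
        · intro h1
          have : g (i, true) = g (i, false) := by simp [hg, h1]
          have := hinj this
          simp at this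
        · intro h1
          have : g (i, true) = g (i, false) := by simp [hg, h1, inv_neg, inv_one]
          have := hinj this
          simp at this
    · rintro ⟨hy, hone⟩
      rintro ⟨i, b⟩ ⟨j, c⟩ h
      have hne : x i ≠ (x i)⁻¹ := fun hc => by
        rcases keyinv i hc with h1 | h1
        · exact (hone i).1 h1
        · exact (hone i).2 h1
      cases b <;> cases c <;> simp only [hg, if_true, if_false] at h
      · have := hy i j ((key i j).2 (Or.inl (inv_injective h)))
        simp [this]
      · have hij : i = j := hy i j ((key i j).2 (Or.inr (inv_eq_iff_eq_inv.1 h)))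
        subst hij
        exact absurd h.symm hne
      · have hij : i = j := hy i j ((key i j).2 (Or.inr h))
        subst hij
        exact absurd h hne
      · have := hy i j ((key i j).2 (Or.inl h))
        simp [this]
  -- Δ condition
  have hdelta : (∏ i, ∏ j ∈ Finset.Ioi i, ((x i + (x i)⁻¹) - (x j + (x j)⁻¹)) ^ 2) ≠ 0 ↔
      (∀ i j : Fin n, x i + (x i)⁻¹ = x j + (x j)⁻¹ → i = j) := by
    rw [Finset.prod_ne_zero_iff]
    constructor
    · intro h i j hij
      by_contra hne
      rcases lt_or_gt_of_ne hne with hlt | hlt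
      · exact (Finset.prod_ne_zero_iff.1 (h i (Finset.mem_univ i)) j (Finset.mem_Ioi.2 hlt))
          (by rw [hij, sub_self]; norm_num)
      · exact (Finset.prod_ne_zero_iff.1 (h j (Finset.mem_univ j)) i (Finset.mem_Ioi.2 hlt))
          (by rw [← hij, sub_self]; norm_num)
    · intro h i _
      rw [Finset.prod_ne_zero_iff]
      intro j hj
      refine pow_ne_zero _ (sub_ne_zero.2 fun hc => ?_)
      have := h i j hc
      subst this
      exact absurd (Finset.mem_Ioi.1 hj) (lt_irrefl i)
  -- Δ' condition
  have heval : ∀ (a : K), f (Q.eval a) = ∏ i, ((f a) - (x i + (x i)⁻¹)) := by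
    intro a
    rw [← Polynomial.eval₂_at_apply, ← Polynomial.eval_map, hQroots, Polynomial.eval_prod]
    simp
  have hinj : Function.Injective f := f.injective
  have hdelta' : Q.eval 2 * Q.eval (-2) ≠ 0 ↔ ∀ i : Fin n, x i ≠ 1 ∧ x i ≠ -1 := by
    rw [mul_ne_zero_iff]
    have e2 : Q.eval 2 ≠ 0 ↔ ∀ i : Fin n, x i ≠ 1 := by
      rw [← map_ne_zero_iff f hinj, heval 2]
      rw [Finset.prod_ne_zero_iff]
      simp only [map_ofNat]
      constructor
      · intro h i
        intro hc
        exact h i (Finset.mem_univ i) (by rw [sub_eq_zero]; exact ((key2 i).2 hc).symm)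
      · intro h i _
        refine sub_ne_zero.2 fun hc => h i ((key2 i).1 hc.symm)
    have e3 : Q.eval (-2) ≠ 0 ↔ ∀ i : Fin n, x i ≠ -1 := by
      rw [← map_ne_zero_iff f hinj, heval (-2)]
      rw [Finset.prod_ne_zero_iff]
      simp only [map_neg, map_ofNat]
      constructor
      · intro h i
        intro hc
        exact h i (Finset.mem_univ i) (by rw [sub_eq_zero]; exact ((key3 i).2 hc).symm)
      · intro h i _
        refine sub_ne_zero.2 fun hc => h i ((key3 i).1 hc.symm)
    rw [e2, e3]
    constructor
    · rintro ⟨h1, h2⟩ i; exact ⟨h1 i, h2 i⟩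
    · intro h; exact ⟨fun i => (h i).1, fun i => (h i).2⟩
  rw [hsep, hmid, hdelta, hdelta']
end

section
/- All twelve roots (in ℂ) of the palindromic polynomials P_2(x) and P_3(x), where R_ℓ(x) = P_ℓ(x)(x−1) with R_2(x) = x⁷ + (1/4)x⁶ − x⁵ − (13/16)x⁴ + (13/16)x³ + x² − (1/4)x − 1 and R_3(x) = x⁷ − (29/27)x⁶ + (175/243)x⁵ − (1099/729)x⁴ + (1099/729)x³ − (175/243)x² + (29/27)x − 1, lie on the unit circle. -/
open Polynomial

lemma abs_eq_one_aux (z : ℂ) (hz : z ≠ 0) (y : ℝ) (hy : y ^ 2 ≤ 4)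
    (h : z + z⁻¹ = (y : ℂ)) : ‖z‖ = 1 := by
  have hn : Complex.normSq z ≠ 0 := by simpa [Complex.normSq_eq_zero] using hz
  have him : z.im + -z.im / Complex.normSq z = 0 := by
    have := congrArg Complex.im h
    simpa [Complex.add_im, Complex.inv_im] using this
  by_cases hb : z.im = 0
  · have hre := congrArg Complex.re h
    simp only [Complex.add_re, Complex.inv_re, Complex.ofReal_re] at hre
    have hre0 : z.re ≠ 0 := by
      intro h0
      exact hz (Complex.ext h0 hb)
    have hns : Complex.normSq z = z.re ^ 2 := by
      simp [Complex.normSq_apply, hb, sq]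
    rw [hns] at hre
    have h1 : z.re ^ 2 - y * z.re + 1 = 0 := by
      field_simp at hre
      have hm : z.re * (z.re ^ 2 - y * z.re + 1) = 0 := by linear_combination z.re * hre
      rcases mul_eq_zero.mp hm with h | h
      · exact absurd h hre0
      · exact h
    have h2 : z.re ^ 2 = 1 := by nlinarith [sq_nonneg (z.re ^ 2 - 1), sq_nonneg (y - 2 * z.re)]
    rw [Complex.norm_def, hns, h2, Real.sqrt_one]
  · have h1 : z.im * (Complex.normSq z - 1) = 0 := by
      field_simp at him
      linarith [him]
    have h2 : Complex.normSq z = 1 := by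
      rcases mul_eq_zero.mp h1 with h | h
      · exact absurd h hb
      · linarith
    rw [Complex.norm_def, h2, Real.sqrt_one]

lemma cubic_roots_aux (c2 c1 c0 : ℂ) (r1 r2 r3 w : ℂ)
    (h12 : r1 ≠ r2) (h13 : r1 ≠ r3) (h23 : r2 ≠ r3)
    (hr1 : r1 ^ 3 + c2 * r1 ^ 2 + c1 * r1 + c0 = 0)
    (hr2 : r2 ^ 3 + c2 * r2 ^ 2 + c1 * r2 + c0 = 0)
    (hr3 : r3 ^ 3 + c2 * r3 ^ 2 + c1 * r3 + c0 = 0)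
    (hw : w ^ 3 + c2 * w ^ 2 + c1 * w + c0 = 0) :
    w = r1 ∨ w = r2 ∨ w = r3 := by
  by_contra hcon
  push_neg at hcon
  obtain ⟨hw1, hw2, hw3⟩ := hcon
  set q : Polynomial ℂ := X ^ 3 + C c2 * X ^ 2 + C c1 * X + C c0 with hqdef
  have hqd : q.natDegree = 3 := by
    unfold q
    compute_degree!
  have hq0 : q ≠ 0 := by
    intro h
    rw [h] at hqd
    simp at hqd
  have hmem : ∀ x : ℂ, x ^ 3 + c2 * x ^ 2 + c1 * x + c0 = 0 → x ∈ q.roots.toFinset := by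
    intro x hx
    rw [Multiset.mem_toFinset, mem_roots hq0]
    simpa [IsRoot, hqdef] using hx
  have hsub : ({r1, r2, r3, w} : Finset ℂ) ⊆ q.roots.toFinset := by
    intro x hx
    simp only [Finset.mem_insert, Finset.mem_singleton] at hx
    rcases hx with rfl | rfl | rfl | rfl
    · exact hmem _ hr1
    · exact hmem _ hr2
    · exact hmem _ hr3
    · exact hmem _ hw
  have hcard : ({r1, r2, r3, w} : Finset ℂ).card = 4 := by
    rw [Finset.card_insert_of_notMem (by simp [h12, h13, Ne.symm hw1]),
      Finset.card_insert_of_notMem (by simp [h23, Ne.symm hw2]),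
      Finset.card_insert_of_notMem (by simp [Ne.symm hw3]),
      Finset.card_singleton]
  have h1 := Finset.card_le_card hsub
  have h2 := q.roots.toFinset_card_le
  have h3 := q.card_roots'
  omega

lemma key_aux (P : Polynomial ℂ) (c2 c1 c0 r1 r2 r3 : ℝ)
    (h12 : r1 ≠ r2) (h13 : r1 ≠ r3) (h23 : r2 ≠ r3)
    (hb1 : r1 ^ 2 ≤ 4) (hb2 : r2 ^ 2 ≤ 4) (hb3 : r3 ^ 2 ≤ 4)
    (hf1 : r1 ^ 3 + c2 * r1 ^ 2 + c1 * r1 + c0 = 0)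
    (hf2 : r2 ^ 3 + c2 * r2 ^ 2 + c1 * r2 + c0 = 0)
    (hf3 : r3 ^ 3 + c2 * r3 ^ 2 + c1 * r3 + c0 = 0)
    (hP0 : P.eval 0 ≠ 0)
    (hcub : ∀ z : ℂ, z ≠ 0 → z ≠ 1 → P.eval z = 0 →
      (z + z⁻¹) ^ 3 + (c2 : ℂ) * (z + z⁻¹) ^ 2 + (c1 : ℂ) * (z + z⁻¹) + (c0 : ℂ) = 0) :
    ∀ z ∈ P.roots, ‖z‖ = 1 := by
  intro z hz
  rw [mem_roots'] at hz
  obtain ⟨hP, hzr⟩ := hz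
  have hz0 : z ≠ 0 := by rintro rfl; exact hP0 hzr
  by_cases hz1 : z = 1
  · subst hz1; simp
  have hQ := hcub z hz0 hz1 hzr
  have c1' : ((r1 : ℂ)) ^ 3 + (c2 : ℂ) * (r1 : ℂ) ^ 2 + (c1 : ℂ) * (r1 : ℂ) + (c0 : ℂ) = 0 := by
    exact_mod_cast congrArg (fun t : ℝ => (t : ℂ)) hf1
  have c2' : ((r2 : ℂ)) ^ 3 + (c2 : ℂ) * (r2 : ℂ) ^ 2 + (c1 : ℂ) * (r2 : ℂ) + (c0 : ℂ) = 0 := by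
    exact_mod_cast congrArg (fun t : ℝ => (t : ℂ)) hf2
  have c3' : ((r3 : ℂ)) ^ 3 + (c2 : ℂ) * (r3 : ℂ) ^ 2 + (c1 : ℂ) * (r3 : ℂ) + (c0 : ℂ) = 0 := by
    exact_mod_cast congrArg (fun t : ℝ => (t : ℂ)) hf3
  rcases cubic_roots_aux (c2 : ℂ) (c1 : ℂ) (c0 : ℂ) (r1 : ℂ) (r2 : ℂ) (r3 : ℂ) (z + z⁻¹)
      (by exact_mod_cast h12) (by exact_mod_cast h13) (by exact_mod_cast h23)
      c1' c2' c3' hQ with h | h | h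
  · exact abs_eq_one_aux z hz0 r1 hb1 h
  · exact abs_eq_one_aux z hz0 r2 hb2 h
  · exact abs_eq_one_aux z hz0 r3 hb3 h

/-- All roots of the palindromic factors `P₂`, `P₃` of the Satake characteristic
polynomials `R₂`, `R₃` lie on the unit circle. -/
theorem satake_roots_on_unit_circle
    (P₂ P₃ : Polynomial ℂ)
    (h₂ : P₂ * (X - 1) =
      X ^ 7 + C (1/4 : ℂ) * X ^ 6 - X ^ 5 - C (13/16 : ℂ) * X ^ 4
        + C (13/16 : ℂ) * X ^ 3 + X ^ 2 - C (1/4 : ℂ) * X - 1)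
    (h₃ : P₃ * (X - 1) =
      X ^ 7 - C (29/27 : ℂ) * X ^ 6 + C (175/243 : ℂ) * X ^ 5
        - C (1099/729 : ℂ) * X ^ 4 + C (1099/729 : ℂ) * X ^ 3
        - C (175/243 : ℂ) * X ^ 2 + C (29/27 : ℂ) * X - 1) :
    (∀ z ∈ P₂.roots, ‖z‖ = 1) ∧ (∀ z ∈ P₃.roots, ‖z‖ = 1) := by
  constructor
  · -- ℓ = 2 : cubic  y³ + (5/4)y² − (11/4)y − 49/16
    set f : ℝ → ℝ := fun y => y ^ 3 + (5/4) * y ^ 2 + (-11/4) * y + (-49/16) with hf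
    have hcont : ∀ a b : ℝ, ContinuousOn f (Set.Icc a b) := by
      intro a b; fun_prop
    obtain ⟨s1, hs1m, hs1⟩ := intermediate_value_Ioo (by norm_num : (-2 : ℝ) ≤ -3/2)
      (hcont _ _) (show (0:ℝ) ∈ Set.Ioo (f (-2)) (f (-3/2)) by simp only [hf]; norm_num)
    obtain ⟨s2, hs2m, hs2⟩ := intermediate_value_Ioo' (by norm_num : (-3/2 : ℝ) ≤ -1)
      (hcont _ _) (show (0:ℝ) ∈ Set.Ioo (f (-1)) (f (-3/2)) by simp only [hf]; norm_num)
    obtain ⟨s3, hs3m, hs3⟩ := intermediate_value_Ioo (by norm_num : (-1 : ℝ) ≤ 2)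
      (hcont _ _) (show (0:ℝ) ∈ Set.Ioo (f (-1)) (f 2) by simp only [hf]; norm_num)
    obtain ⟨hs1a, hs1b⟩ := hs1m
    obtain ⟨hs2a, hs2b⟩ := hs2m
    obtain ⟨hs3a, hs3b⟩ := hs3m
    simp only [hf] at hs1 hs2 hs3
    refine key_aux P₂ (5/4) (-11/4) (-49/16) s1 s2 s3
      (by linarith) (by linarith) (by linarith)
      (by nlinarith) (by nlinarith) (by nlinarith)
      hs1 hs2 hs3 ?_ ?_
    · have h := congrArg (eval 0) h₂
      simp only [eval_mul, eval_sub, eval_add, eval_pow, eval_X, eval_one, eval_C] at h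
      norm_num at h
      intro h0
      rw [h0] at h
      norm_num at h
    · intro z hz0 hz1 hzr
      have h := congrArg (eval z) h₂
      simp only [eval_mul, eval_sub, eval_add, eval_pow, eval_X, eval_one, eval_C, hzr,
        zero_mul] at h
      push_cast
      have hz1' : z - 1 ≠ 0 := sub_ne_zero.mpr hz1
      have hw : (z + z⁻¹) * z = z ^ 2 + 1 := by
        field_simp
      have key : ((z + z⁻¹) ^ 3 + (5/4 : ℂ) * (z + z⁻¹) ^ 2 + (-11/4 : ℂ) * (z + z⁻¹)
          + (-49/16 : ℂ)) * (z ^ 3 * (z - 1)) =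
          z ^ 7 + (1/4 : ℂ) * z ^ 6 - z ^ 5 - (13/16 : ℂ) * z ^ 4
            + (13/16 : ℂ) * z ^ 3 + z ^ 2 - (1/4 : ℂ) * z - 1 := by
        linear_combination (((z + z⁻¹) ^ 2 * z ^ 2 + (z + z⁻¹) * z * (z ^ 2 + 1)
          + (z ^ 2 + 1) ^ 2 + (5/4 : ℂ) * z * ((z + z⁻¹) * z + z ^ 2 + 1)
          + (-11/4 : ℂ) * z ^ 2) * (z - 1)) * hw
      rw [← h] at key
      rcases mul_eq_zero.mp key with h' | h'
      · exact h'
      · exact absurd h' (mul_ne_zero (pow_ne_zero 3 hz0) hz1')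
  · -- ℓ = 3 : cubic  y³ − (2/27)y² − (572/243)y − 520/729
    set f : ℝ → ℝ := fun y => y ^ 3 + (-2/27) * y ^ 2 + (-572/243) * y + (-520/729) with hf
    have hcont : ∀ a b : ℝ, ContinuousOn f (Set.Icc a b) := by
      intro a b; fun_prop
    obtain ⟨s1, hs1m, hs1⟩ := intermediate_value_Ioo (by norm_num : (-2 : ℝ) ≤ -1)
      (hcont _ _) (show (0:ℝ) ∈ Set.Ioo (f (-2)) (f (-1)) by simp only [hf]; norm_num)
    obtain ⟨s2, hs2m, hs2⟩ := intermediate_value_Ioo' (by norm_num : (-1 : ℝ) ≤ 0)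
      (hcont _ _) (show (0:ℝ) ∈ Set.Ioo (f 0) (f (-1)) by simp only [hf]; norm_num)
    obtain ⟨s3, hs3m, hs3⟩ := intermediate_value_Ioo (by norm_num : (0 : ℝ) ≤ 2)
      (hcont _ _) (show (0:ℝ) ∈ Set.Ioo (f 0) (f 2) by simp only [hf]; norm_num)
    obtain ⟨hs1a, hs1b⟩ := hs1m
    obtain ⟨hs2a, hs2b⟩ := hs2m
    obtain ⟨hs3a, hs3b⟩ := hs3m
    simp only [hf] at hs1 hs2 hs3
    refine key_aux P₃ (-2/27) (-572/243) (-520/729) s1 s2 s3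
      (by linarith) (by linarith) (by linarith)
      (by nlinarith) (by nlinarith) (by nlinarith)
      hs1 hs2 hs3 ?_ ?_
    · have h := congrArg (eval 0) h₃
      simp only [eval_mul, eval_sub, eval_add, eval_pow, eval_X, eval_one, eval_C] at h
      norm_num at h
      intro h0
      rw [h0] at h
      norm_num at h
    · intro z hz0 hz1 hzr
      have h := congrArg (eval z) h₃
      simp only [eval_mul, eval_sub, eval_add, eval_pow, eval_X, eval_one, eval_C, hzr,
        zero_mul] at h
      push_cast
      have hz1' : z - 1 ≠ 0 := sub_ne_zero.mpr hz1
      have hw : (z + z⁻¹) * z = z ^ 2 + 1 := by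
        field_simp
      have key : ((z + z⁻¹) ^ 3 + (-2/27 : ℂ) * (z + z⁻¹) ^ 2 + (-572/243 : ℂ) * (z + z⁻¹)
          + (-520/729 : ℂ)) * (z ^ 3 * (z - 1)) =
          z ^ 7 - (29/27 : ℂ) * z ^ 6 + (175/243 : ℂ) * z ^ 5
            - (1099/729 : ℂ) * z ^ 4 + (1099/729 : ℂ) * z ^ 3
            - (175/243 : ℂ) * z ^ 2 + (29/27 : ℂ) * z - 1 := by
        linear_combination (((z + z⁻¹) ^ 2 * z ^ 2 + (z + z⁻¹) * z * (z ^ 2 + 1)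
          + (z ^ 2 + 1) ^ 2 + (-2/27 : ℂ) * z * ((z + z⁻¹) * z + z ^ 2 + 1)
          + (-572/243 : ℂ) * z ^ 2) * (z - 1)) * hw
      rw [← h] at key
      rcases mul_eq_zero.mp key with h' | h'
      · exact h'
      · exact absurd h' (mul_ne_zero (pow_ne_zero 3 hz0) hz1')
end
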